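/- arXiv:1701.07155 — 3 statements merged into one kernel-verified Lean document; each statement's English description precedes it below -/
import Mathlib

section
/- Let V, W ⊆ S^d be equivalent polybox codes. If there exist i ∈ [d], l ∈ S and a word w ∈ W \ (W^{i,l} ∪ W^{i,l'}) such that the set U^{i,l} = {v ∈ V^{i,l} : v̆ ∩ w̆ ≠ ∅} is non-empty, then the codes U^{i,l}_{i^c} and U^{i,l'}_{i^c} are w_{i^c}-equivalent, where U^{i,l'} = {v ∈ V^{i,l'} : v̆ ∩ w̆ ≠ ∅}. -/
/-- Two words `u, v ∈ S^d` are dichotomous if `v j = (u j)'` for some coordinate `j`. -/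
def Dichotomous {S : Type*} (c : S → S) {d : ℕ} (u v : Fin d → S) : Prop :=
  ∃ j, v j = c (u j)

/-- Two words form a twin pair if they differ by complementation at exactly one
coordinate and agree elsewhere. -/
def TwinPair {S : Type*} (c : S → S) {d : ℕ} (u v : Fin d → S) : Prop :=
  ∃ j, v j = c (u j) ∧ ∀ i, i ≠ j → u i = v i

/-- A polybox code: a set of pairwise dichotomous words. -/
def PolyboxCode {S : Type*} (c : S → S) {d : ℕ} (V : Finset (Fin d → S)) : Prop :=
  ∀ u ∈ V, ∀ v ∈ V, u ≠ v → Dichotomous c u v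

/-- A code without twin pairs. -/
def TwinPairFree {S : Type*} (c : S → S) {d : ℕ} (V : Finset (Fin d → S)) : Prop :=
  ∀ u ∈ V, ∀ v ∈ V, ¬ TwinPair c u v

/-- `ES`: the collection of all `B ⊆ S` containing exactly one letter from each
complementary pair `{s, s'}`. -/
def ESet {S : Type*} (c : S → S) : Set (Set S) :=
  {B | ∀ s : S, Xor' (s ∈ B) (c s ∈ B)}

/-- The equicomplementary realization `v̆ = Ev₁ × ⋯ × Ev_d` of a word `v`,
where `Es = {B ∈ ES : s ∈ B}`. -/
def WordBox {S : Type*} (c : S → S) {d : ℕ} (v : Fin d → S) : Set (Fin d → Set S) :=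
  {x | ∀ i, x i ∈ ESet c ∧ v i ∈ x i}

/-- `⋃ E(V)`, the union of the equicomplementary realizations of the words of `V`. -/
def CodeReal {S : Type*} (c : S → S) {d : ℕ} (V : Finset (Fin d → S)) :
    Set (Fin d → Set S) :=
  ⋃ v ∈ V, WordBox c v

/-- The word `w` is covered by the code `V`, i.e. `w̆ ⊆ ⋃ E(V)`. -/
def Covered {S : Type*} (c : S → S) {d : ℕ} (w : Fin d → S)
    (V : Finset (Fin d → S)) : Prop :=
  WordBox c w ⊆ CodeReal c V

/-- Codes `V` and `W` are equivalent: `⋃ E(V) = ⋃ E(W)`. -/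
def EquivalentCodes {S : Type*} (c : S → S) {d : ℕ} (V W : Finset (Fin d → S)) : Prop :=
  CodeReal c V = CodeReal c W

/-- The cylinder realization of a word over the coordinates in `I` only: this is
`⋃`-compatible stand-in for the realization of the restricted word `v_I`; for
`I = {i}ᶜ` it realizes `v_{i^c}` (the word with the `i`-th letter deleted) as a
cylinder, so that statements about realizations of deleted codes become statements
about these cylinders. -/
def BoxOn {S : Type*} (c : S → S) {d : ℕ} (I : Set (Fin d)) (v : Fin d → S) :
    Set (Fin d → Set S) :=
  {x | ∀ i ∈ I, x i ∈ ESet c ∧ v i ∈ x i}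


section Aux

variable {S : Type*}

/-- Setoid identifying each letter with its complement. -/
def pairSetoid (c : S → S) (hinv : ∀ s, c (c s) = s) : Setoid S where
  r s t := t = s ∨ t = c s
  iseqv := by
    constructor
    · intro s; exact Or.inl rfl
    · rintro s t (rfl | rfl)
      · exact Or.inl rfl
      · exact Or.inr (hinv s).symm
    · rintro s t u hst htu
      rcases hst with rfl | rfl
      · exact htu
      · rcases htu with rfl | rfl
        · exact Or.inr rfl
        · exact Or.inl (hinv s)

lemma exists_ESet_base (c : S → S) (hinv : ∀ s, c (c s) = s)
    (hnfix : ∀ s, c s ≠ s) : ∃ B, B ∈ ESet c := by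
  classical
  refine ⟨{s | (Quotient.mk (pairSetoid c hinv) s).out = s}, fun s => ?_⟩
  have hq : Quotient.mk (pairSetoid c hinv) (c s) = Quotient.mk (pairSetoid c hinv) s :=
    Quotient.sound (Or.inr (hinv s).symm)
  have ho : s = (Quotient.mk (pairSetoid c hinv) s).out ∨
      s = c (Quotient.mk (pairSetoid c hinv) s).out :=
    @Quotient.exact S (pairSetoid c hinv) _ s (Quotient.out_eq _)
  simp only [ESet, Set.mem_setOf_eq]
  rcases ho with hs | hs
  · left
    refine ⟨hs.symm, fun hcontra => ?_⟩
    rw [hq, ← hs] at hcontra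
    exact hnfix s hcontra.symm
  · have hout : (Quotient.mk (pairSetoid c hinv) s).out = c s := by
      have := congrArg c hs
      rw [hinv] at this
      exact this.symm
    right
    refine ⟨by rw [hq]; exact hout, fun hcontra => ?_⟩
    rw [hout] at hcontra
    exact hnfix s hcontra

lemma exists_ESet_pair (c : S → S) (hinv : ∀ s, c (c s) = s)
    (hnfix : ∀ s, c s ≠ s) (s t : S) (hts : t ≠ c s) :
    ∃ B ∈ ESet c, s ∈ B ∧ t ∈ B := by
  classical
  obtain ⟨B0, hB0⟩ := exists_ESet_base c hinv hnfix
  have cinj : ∀ a b : S, c a = c b → a = b := fun a b h => by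
    have := congrArg c h; rwa [hinv, hinv] at this
  have hst : s ≠ c t := by
    intro h
    apply hts
    have := congrArg c h; rw [hinv] at this; exact this.symm
  refine ⟨{u | u = s ∨ u = t ∨ (u ≠ c s ∧ u ≠ c t ∧ u ∈ B0)}, fun u => ?_,
    Or.inl rfl, Or.inr (Or.inl rfl)⟩
  by_cases hus : u = s
  · subst hus
    left
    refine ⟨Or.inl rfl, ?_⟩
    rintro (h1 | h2 | h3)
    · exact hnfix u h1
    · exact hts h2.symm
    · exact h3.1 rfl
  · by_cases hut : u = t
    · subst hut
      left
      refine ⟨Or.inr (Or.inl rfl), ?_⟩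
      rintro (h1 | h2 | h3)
      · exact hst h1.symm
      · exact hnfix u h2
      · exact h3.2.1 rfl
    · by_cases hucs : u = c s
      · subst hucs
        right
        constructor
        · exact Or.inl (hinv s)
        · rintro (h1 | h2 | h3)
          · exact hnfix s h1
          · exact hts h2.symm
          · exact h3.1 rfl
      · by_cases huct : u = c t
        · subst huct
          right
          constructor
          · exact Or.inr (Or.inl (hinv t))
          · rintro (h1 | h2 | h3)
            · exact hst h1.symm
            · exact hnfix t h2
            · exact h3.2.1 rfl
        · have h1 : c u ≠ s := fun h => hucs (by rw [← h, hinv])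
          have h2 : c u ≠ t := fun h => huct (by rw [← h, hinv])
          rcases hB0 u with ⟨hu, hcu⟩ | ⟨hcu, hu⟩
          · left
            refine ⟨Or.inr (Or.inr ⟨hucs, huct, hu⟩), ?_⟩
            rintro (g1 | g2 | g3)
            · exact h1 g1
            · exact h2 g2
            · exact hcu g3.2.2
          · right
            constructor
            · exact Or.inr (Or.inr ⟨fun h => hus (cinj _ _ h), fun h => hut (cinj _ _ h), hcu⟩)
            · rintro (g1 | g2 | g3)
              · exact hus g1
              · exact hut g2
              · exact hu g3.2.2

/-- One-directional inclusion; applied twice (with `l` and `c l`) it gives the theorem. -/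
lemma main_sub (c : S → S) (hinv : ∀ s, c (c s) = s) (hnfix : ∀ s, c s ≠ s)
    {d : ℕ} (V W : Finset (Fin d → S))
    (hVcode : PolyboxCode c V)
    (hequiv : EquivalentCodes c V W)
    (i : Fin d) (l : S) (w : Fin d → S) (hw : w ∈ W)
    (hwl : w i ≠ l) (hwl' : w i ≠ c l) :
    BoxOn c ({i}ᶜ) w ∩
        (⋃ v ∈ {v : Fin d → S |
            v ∈ V ∧ v i = l ∧ (WordBox c v ∩ WordBox c w).Nonempty},
          BoxOn c ({i}ᶜ) v) ⊆
      BoxOn c ({i}ᶜ) w ∩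
        (⋃ v ∈ {v : Fin d → S |
            v ∈ V ∧ v i = c l ∧ (WordBox c v ∩ WordBox c w).Nonempty},
          BoxOn c ({i}ᶜ) v) := by
  classical
  rintro x ⟨hxw, hxU⟩
  simp only [Set.mem_iUnion, Set.mem_setOf_eq] at hxU
  obtain ⟨v, ⟨hvV, hvil, -⟩, hxv⟩ := hxU
  -- build the point y
  have hwi : w i ≠ c (c l) := by rw [hinv]; exact hwl
  obtain ⟨B, hBES, hclB, hwiB⟩ := exists_ESet_pair c hinv hnfix (c l) (w i) hwi
  set y : Fin d → Set S := Function.update x i B with hy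
  have hyi : y i = B := Function.update_self i B x
  have hyj : ∀ j, j ≠ i → y j = x j := fun j hj => Function.update_of_ne hj B x
  have hyw : y ∈ WordBox c w := by
    intro j
    by_cases hj : j = i
    · subst hj; rw [hyi]; exact ⟨hBES, hwiB⟩
    · rw [hyj j hj]
      exact hxw j (by simpa using hj)
  have hyV : y ∈ CodeReal c V := by
    rw [hequiv]
    exact Set.mem_biUnion hw hyw
  simp only [CodeReal, Set.mem_iUnion] at hyV
  obtain ⟨v', hv'V, hyv'⟩ := hyV
  have hlB : l ∉ B := by
    intro hlB
    rcases hBES l with ⟨-, h⟩ | ⟨-, h⟩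
    · exact h hclB
    · exact h hlB
  have hvne : v' ≠ v := by
    rintro rfl
    have := (hyv' i).2
    rw [hyi, hvil] at this
    exact hlB this
  obtain ⟨j, hjd⟩ := hVcode v' hv'V v hvV hvne
  have hji : j = i := by
    by_contra hj
    have hx1 := hxv j (by simpa using hj)
    have hx2 := (hyv' j)
    rw [hyj j hj] at hx2
    rcases hx1.1 (v' j) with ⟨-, h⟩ | ⟨-, h⟩
    · rw [← hjd] at h; exact h hx1.2
    · exact h hx2.2
  subst hji
  rw [hvil] at hjd
  have hv'i : v' j = c l := by
    have := congrArg c hjd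
    rw [hinv] at this
    exact this.symm
  refine ⟨hxw, ?_⟩
  simp only [Set.mem_iUnion, Set.mem_setOf_eq]
  refine ⟨v', ⟨hv'V, hv'i, ⟨y, hyv', hyw⟩⟩, ?_⟩
  intro k hk
  have hki : k ≠ j := by simpa using hk
  have := hyv' k
  rwa [hyj k hki] at this

end Aux

/-- Let `V, W ⊆ S^d` be equivalent polybox codes, `i ∈ [d]`, `l ∈ S`, and let
`w ∈ W \ (W^{i,l} ∪ W^{i,l'})` be such that `U^{i,l} = {v ∈ V^{i,l} : v̆ ∩ w̆ ≠ ∅}`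
is nonempty. Then the codes `U^{i,l}_{i^c}` and `U^{i,l'}_{i^c}` are
`w_{i^c}`-equivalent (stated via cylinder realizations over the coordinates `≠ i`). -/
theorem deleted_codes_w_equivalent {S : Type*} [Fintype S] [DecidableEq S]
    (c : S → S) (hinv : ∀ s, c (c s) = s) (hnfix : ∀ s, c s ≠ s)
    (d : ℕ) (V W : Finset (Fin d → S))
    (hVcode : PolyboxCode c V) (hWcode : PolyboxCode c W)
    (hequiv : EquivalentCodes c V W)
    (i : Fin d) (l : S) (w : Fin d → S) (hw : w ∈ W)
    (hwl : w i ≠ l) (hwl' : w i ≠ c l)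
    (hne : {v : Fin d → S |
      v ∈ V ∧ v i = l ∧ (WordBox c v ∩ WordBox c w).Nonempty}.Nonempty) :
    BoxOn c ({i}ᶜ) w ∩
        (⋃ v ∈ {v : Fin d → S |
            v ∈ V ∧ v i = l ∧ (WordBox c v ∩ WordBox c w).Nonempty},
          BoxOn c ({i}ᶜ) v) =
      BoxOn c ({i}ᶜ) w ∩
        (⋃ v ∈ {v : Fin d → S |
            v ∈ V ∧ v i = c l ∧ (WordBox c v ∩ WordBox c w).Nonempty},
          BoxOn c ({i}ᶜ) v) := by
  
  apply Set.Subset.antisymm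
  · exact main_sub c hinv hnfix V W hVcode hequiv i l w hw hwl hwl'
  · have h := main_sub c hinv hnfix V W hVcode hequiv i (c l) w hw hwl' (by rw [hinv]; exact hwl)
    simpa only [hinv] using h
end

section
/- Let V, W ⊆ S^d be equivalent polybox codes. Then for every i ∈ [d] and every l ∈ S, ⋃E(V^{i,l}_{i^c}) \ ⋃E(V^{i,l'}_{i^c}) = ⋃E(W^{i,l}_{i^c}) \ ⋃E(W^{i,l'}_{i^c}). -/
section Aux

variable {S : Type*}

/-- Replace the choice at the pair `{s, c s}` by `s`. -/
def Eswap (c : S → S) (B : Set S) (s : S) : Set S :=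
  {t | t = s ∨ (t ≠ s ∧ t ≠ c s ∧ t ∈ B)}

lemma eswap_mem (c : S → S) (B : Set S) (s : S) : s ∈ Eswap c B s := Or.inl rfl

lemma eswap_mem_of_ne (c : S → S) (B : Set S) (s : S) {u : S}
    (h1 : u ≠ s) (h2 : u ≠ c s) (hu : u ∈ B) : u ∈ Eswap c B s :=
  Or.inr ⟨h1, h2, hu⟩

lemma eswap_ES (c : S → S) (hinv : ∀ s, c (c s) = s) (hnfix : ∀ s, c s ≠ s)
    {B : Set S} (hB : B ∈ ESet c) (s : S) : Eswap c B s ∈ ESet c := by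
  intro t
  rcases eq_or_ne t s with rfl | hts
  · left
    refine ⟨Or.inl rfl, ?_⟩
    rintro (h | ⟨h1, h2, _⟩)
    · exact hnfix t h
    · exact h2 rfl
  · rcases eq_or_ne t (c s) with rfl | htcs
    · right
      refine ⟨?_, ?_⟩
      · show c (c s) ∈ Eswap c B s
        rw [hinv]
        exact eswap_mem c B s
      · rintro (h | ⟨h1, h2, _⟩)
        · exact hts h
        · exact h2 rfl
    · have hcts : c t ≠ s := fun h => htcs (by rw [← h, hinv])
      have hctcs : c t ≠ c s := fun h => hts (by
        have := congrArg c h; rwa [hinv, hinv] at this)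
      have hmem1 : t ∈ Eswap c B s ↔ t ∈ B := by
        constructor
        · rintro (h | ⟨_, _, h⟩)
          · exact absurd h hts
          · exact h
        · intro h; exact Or.inr ⟨hts, htcs, h⟩
      have hmem2 : c t ∈ Eswap c B s ↔ c t ∈ B := by
        constructor
        · rintro (h | ⟨_, _, h⟩)
          · exact absurd h hcts
          · exact h
        · intro h; exact Or.inr ⟨hcts, hctcs, h⟩
      rcases hB t with ⟨h1, h2⟩ | ⟨h1, h2⟩
      · exact Or.inl ⟨hmem1.mpr h1, fun h => h2 (hmem2.mp h)⟩
      · exact Or.inr ⟨hmem2.mpr h1, fun h => h2 (hmem1.mp h)⟩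

lemma exists_ES [Fintype S] (c : S → S) (hinv : ∀ s, c (c s) = s)
    (hnfix : ∀ s, c s ≠ s) : ∃ H, H ∈ ESet c := by
  classical
  let e := Fintype.equivFin S
  refine ⟨{s | e s < e (c s)}, fun s => ?_⟩
  have h1 : e (c (c s)) = e s := by rw [hinv]
  have hne : e s ≠ e (c s) := fun h => hnfix s (e.injective h.symm)
  have hmem : s ∈ {s | e s < e (c s)} ↔ e s < e (c s) := Iff.rfl
  have hmem' : c s ∈ {s | e s < e (c s)} ↔ e (c s) < e s := by
    simp only [Set.mem_setOf_eq, h1]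
  rcases lt_or_gt_of_ne hne with h | h
  · left
    exact ⟨hmem.mpr h, fun hc => absurd (hmem'.mp hc) (asymm h)⟩
  · right
    exact ⟨hmem'.mpr h, fun hc => absurd (hmem.mp hc) (asymm h)⟩

lemma side {S : Type*} [Fintype S] [DecidableEq S]
    (c : S → S) (hinv : ∀ s, c (c s) = s) (hnfix : ∀ s, c s ≠ s)
    {d : ℕ} (V W : Finset (Fin d → S))
    (hVcode : PolyboxCode c V)
    (hequiv : CodeReal c V = CodeReal c W)
    (i : Fin d) (l : S) (x : Fin d → Set S)
    (hx1 : x ∈ ⋃ v ∈ {v : Fin d → S | v ∈ V ∧ v i = l}, BoxOn c ({i}ᶜ) v)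
    (hx2 : x ∉ ⋃ v ∈ {v : Fin d → S | v ∈ V ∧ v i = c l}, BoxOn c ({i}ᶜ) v) :
    x ∈ (⋃ w ∈ {w : Fin d → S | w ∈ W ∧ w i = l}, BoxOn c ({i}ᶜ) w) \
      ⋃ w ∈ {w : Fin d → S | w ∈ W ∧ w i = c l}, BoxOn c ({i}ᶜ) w := by
  classical
  simp only [Set.mem_iUnion, Set.mem_setOf_eq, exists_prop, not_exists, not_and] at hx1 hx2
  obtain ⟨v, ⟨hvV, hvl⟩, hxv⟩ := hx1
  have hmemc : ∀ j : Fin d, j ≠ i → j ∈ ({i}ᶜ : Set (Fin d)) := by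
    intro j hj; simpa using hj
  -- every word of V compatible with x off coordinate i has i-th letter l
  have key : ∀ u ∈ V, x ∈ BoxOn c ({i}ᶜ) u → u i = l := by
    intro u huV hxu
    by_cases huv : u = v
    · rw [huv]; exact hvl
    · exfalso
      obtain ⟨j, hj⟩ := hVcode v hvV u huV (Ne.symm huv)
      rcases eq_or_ne j i with rfl | hji
      · exact hx2 u ⟨huV, by rw [hj, hvl]⟩ hxu
      · have h1 := hxv j (hmemc j hji)
        have h2 := hxu j (hmemc j hji)
        rcases h1.1 (v j) with ⟨_, hn⟩ | ⟨_, hn⟩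
        · exact hn (hj ▸ h2.2)
        · exact hn h1.2
  have keyB : ∀ B ∈ ESet c,
      (l ∈ B ↔ ∃ w ∈ W, x ∈ BoxOn c ({i}ᶜ) w ∧ w i ∈ B) := by
    intro B hB
    constructor
    · intro hlB
      have hy : Function.update x i B ∈ WordBox c v := by
        intro j
        rcases eq_or_ne j i with rfl | hji
        · rw [Function.update_self]
          exact ⟨hB, hvl ▸ hlB⟩
        · rw [Function.update_of_ne hji]
          exact hxv j (hmemc j hji)
      have hmem : Function.update x i B ∈ CodeReal c W := by
        rw [← hequiv]
        simp only [CodeReal, Set.mem_iUnion, exists_prop]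
        exact ⟨v, hvV, hy⟩
      simp only [CodeReal, Set.mem_iUnion, exists_prop] at hmem
      obtain ⟨w, hwW, hw⟩ := hmem
      refine ⟨w, hwW, ?_, ?_⟩
      · intro j hj
        have hji : j ≠ i := by simpa using hj
        have := hw j
        rwa [Function.update_of_ne hji] at this
      · have := (hw i).2
        rwa [Function.update_self] at this
    · rintro ⟨w, hwW, hxw, hwiB⟩
      have hy : Function.update x i B ∈ WordBox c w := by
        intro j
        rcases eq_or_ne j i with rfl | hji
        · rw [Function.update_self]
          exact ⟨hB, hwiB⟩
        · rw [Function.update_of_ne hji]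
          exact hxw j (hmemc j hji)
      have hmem : Function.update x i B ∈ CodeReal c V := by
        rw [hequiv]
        simp only [CodeReal, Set.mem_iUnion, exists_prop]
        exact ⟨w, hwW, hy⟩
      simp only [CodeReal, Set.mem_iUnion, exists_prop] at hmem
      obtain ⟨u, huV, hu⟩ := hmem
      have hxu : x ∈ BoxOn c ({i}ᶜ) u := by
        intro j hj
        have hji : j ≠ i := by simpa using hj
        have := hu j
        rwa [Function.update_of_ne hji] at this
      have huil : u i = l := key u huV hxu
      have := (hu i).2
      rw [Function.update_self, huil] at this
      exact this
  obtain ⟨H, hH⟩ := exists_ES c hinv hnfix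
  -- every word of W compatible with x off coordinate i has i-th letter l
  have keyW : ∀ w ∈ W, x ∈ BoxOn c ({i}ᶜ) w → w i = l := by
    intro w hwW hxw
    by_contra hne
    rcases eq_or_ne (w i) (c l) with hcl | hcl
    · set B := Eswap c H (c l) with hBdef
      have hBes : B ∈ ESet c := eswap_ES c hinv hnfix hH (c l)
      have hclB : c l ∈ B := eswap_mem c H (c l)
      have hlB : l ∈ B := (keyB B hBes).2 ⟨w, hwW, hxw, hcl ▸ hclB⟩
      rcases hBes l with ⟨_, h⟩ | ⟨_, h⟩
      · exact h hclB
      · exact h hlB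
    · set B := Eswap c (Eswap c H (c l)) (w i) with hBdef
      have hBes : B ∈ ESet c :=
        eswap_ES c hinv hnfix (eswap_ES c hinv hnfix hH (c l)) (w i)
      have hwiB : w i ∈ B := eswap_mem c _ (w i)
      have hclB : c l ∈ B := by
        refine eswap_mem_of_ne c _ (w i) (Ne.symm hcl) ?_ (eswap_mem c H (c l))
        intro h
        apply hne
        have := congrArg c h
        rw [hinv, hinv] at this
        exact this.symm
      have hlB : l ∈ B := (keyB B hBes).2 ⟨w, hwW, hxw, hwiB⟩
      rcases hBes l with ⟨_, h⟩ | ⟨_, h⟩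
      · exact h hclB
      · exact h hlB
  have hBes : Eswap c H l ∈ ESet c := eswap_ES c hinv hnfix hH l
  obtain ⟨w, hwW, hxw, _⟩ := (keyB _ hBes).1 (eswap_mem c H l)
  constructor
  · simp only [Set.mem_iUnion, Set.mem_setOf_eq, exists_prop]
    exact ⟨w, ⟨hwW, keyW w hwW hxw⟩, hxw⟩
  · intro h
    simp only [Set.mem_iUnion, Set.mem_setOf_eq, exists_prop] at h
    obtain ⟨w', ⟨hw'W, hw'i⟩, hxw'⟩ := h
    exact hnfix l (by rw [← hw'i, keyW w' hw'W hxw'])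

end Aux

/-- Let `V, W ⊆ S^d` be equivalent polybox codes. Then for every `i ∈ [d]` and
`l ∈ S`, `⋃E(V^{i,l}_{i^c}) \ ⋃E(V^{i,l'}_{i^c}) = ⋃E(W^{i,l}_{i^c}) \ ⋃E(W^{i,l'}_{i^c})`
(stated via cylinder realizations over the coordinates `≠ i`). -/
theorem deleted_codes_difference_eq {S : Type*} [Fintype S] [DecidableEq S]
    (c : S → S) (hinv : ∀ s, c (c s) = s) (hnfix : ∀ s, c s ≠ s)
    (d : ℕ) (V W : Finset (Fin d → S))
    (hVcode : PolyboxCode c V) (hWcode : PolyboxCode c W)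
    (hequiv : EquivalentCodes c V W) :
    ∀ (i : Fin d) (l : S),
      (⋃ v ∈ {v : Fin d → S | v ∈ V ∧ v i = l}, BoxOn c ({i}ᶜ) v) \
          (⋃ v ∈ {v : Fin d → S | v ∈ V ∧ v i = c l}, BoxOn c ({i}ᶜ) v) =
        (⋃ w ∈ {w : Fin d → S | w ∈ W ∧ w i = l}, BoxOn c ({i}ᶜ) w) \
          (⋃ w ∈ {w : Fin d → S | w ∈ W ∧ w i = c l}, BoxOn c ({i}ᶜ) w) := by
  intro i l
  ext x
  constructor
  · intro hx
    exact side c hinv hnfix V W hVcode hequiv i l x hx.1 hx.2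
  · intro hx
    exact side c hinv hnfix W V hWcode hequiv.symm i l x hx.1 hx.2
end

section
/- Let V, W ⊆ S^d be disjoint equivalent polybox codes, let i ∈ [d], l ∈ S, and suppose the set U^{i,l} = {v ∈ V^{i,l} : v̆ ∩ ⋃E(W \ (W^{i,l} ∪ W^{i,l'})) ≠ ∅} is non-empty; define U^{i,l'} analogously. Assume there are disjoint sets A, B with [d] \ {i} = A ∪ B and words p (indexed by A) and q (indexed by B) such that: (i) w_A = p for every w ∈ W \ (W^{i,l} ∪ W^{i,l'}) with w̆ ∩ ⋃E(U^{i,l} ∪ U^{i,l'}) ≠ ∅; and (ii) (U^{i,l} ∪ U^{i,l'})_B = {q}. Let P = {w ∈ W \ (W^{i,l} ∪ W^{i,l'}) : w̆ ∩ ⋃E(U^{i,l} ∪ U^{i,l'}) ≠ ∅}. Then for every s ∈ S \ {l, l'} the codes P^{i,s}_{i^c} and P^{i,s'}_{i^c} are r-equivalent, where r is the word on [d] \ {i} with r_A = p and r_B = q. In particular, if |B| ≤ 1, then there is a twin pair in V or in W. -/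
/-- `W \ (W^{i,l} ∪ W^{i,l'})`: the words of `W` whose `i`-th letter is neither `l`
nor `l'`. -/
def WRest {S : Type*} (c : S → S) {d : ℕ} (W : Finset (Fin d → S)) (i : Fin d)
    (l : S) : Set (Fin d → S) :=
  {w | w ∈ W ∧ w i ≠ l ∧ w i ≠ c l}

/-- `U^{i,m}` (for `m ∈ {l, l'}`): the words `v ∈ V` with `v i = m` whose realization
meets `⋃ E(W \ (W^{i,l} ∪ W^{i,l'}))`. -/
def USet {S : Type*} (c : S → S) {d : ℕ} (V W : Finset (Fin d → S)) (i : Fin d)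
    (l m : S) : Set (Fin d → S) :=
  {v | v ∈ V ∧ v i = m ∧
    (WordBox c v ∩ ⋃ w ∈ WRest c W i l, WordBox c w).Nonempty}

/-- `P`: the words of `W \ (W^{i,l} ∪ W^{i,l'})` whose realization meets
`⋃ E(U^{i,l} ∪ U^{i,l'})`. -/
def PWords {S : Type*} (c : S → S) {d : ℕ} (V W : Finset (Fin d → S)) (i : Fin d)
    (l : S) : Set (Fin d → S) :=
  {w | w ∈ WRest c W i l ∧
    (WordBox c w ∩ ⋃ v ∈ USet c V W i l l ∪ USet c V W i l (c l),
      WordBox c v).Nonempty}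


lemma eset_not_both {S : Type*} {c : S → S} {E : Set S} (hE : E ∈ ESet c)
    {a : S} (ha : a ∈ E) : c a ∉ E := by
  rcases hE a with ⟨_, h2⟩ | ⟨_, h2⟩
  · exact h2
  · exact absurd ha h2

lemma exists_eset_superset {S : Type*} [Fintype S] [DecidableEq S] (c : S → S)
    (hinv : ∀ s, c (c s) = s) (hnfix : ∀ s, c s ≠ s)
    (T : Set S) (hT : ∀ x ∈ T, c x ∉ T) : ∃ E, E ∈ ESet c ∧ T ⊆ E := by
  classical
  set f : S → ℕ := fun x => ((Fintype.equivFin S) x : ℕ) with hf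
  refine ⟨{x | x ∈ T ∨ (c x ∉ T ∧ f x < f (c x))}, ?_, fun x hx => Or.inl hx⟩
  intro s
  by_cases hs : s ∈ T
  · left
    refine ⟨Or.inl hs, ?_⟩
    rintro (h | ⟨h1, _⟩)
    · exact hT s hs h
    · rw [hinv] at h1; exact h1 hs
  · by_cases hcs : c s ∈ T
    · right
      refine ⟨Or.inl hcs, ?_⟩
      rintro (h | ⟨h1, _⟩)
      · exact hs h
      · exact h1 hcs
    · have hne : f s ≠ f (c s) := by
        intro h
        have : s = c s := (Fintype.equivFin S).injective (Fin.val_injective h)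
        exact hnfix s this.symm
      have hccs : c (c s) ∉ T := by rw [hinv]; exact hs
      rcases lt_or_gt_of_ne hne with h | h
      · left
        refine ⟨Or.inr ⟨hcs, h⟩, ?_⟩
        rintro (hc | ⟨_, h2⟩)
        · exact hcs hc
        · rw [hinv] at h2; omega
      · right
        refine ⟨Or.inr ⟨hccs, by rw [hinv]; omega⟩, ?_⟩
        rintro (hc | ⟨_, h2⟩)
        · exact hs hc
        · omega

lemma key_incl {S : Type*} [Fintype S] [DecidableEq S]
    (c : S → S) (hinv : ∀ s, c (c s) = s) (hnfix : ∀ s, c s ≠ s)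
    {d : ℕ} (V W : Finset (Fin d → S))
    (hWcode : PolyboxCode c W) (hequiv : EquivalentCodes c V W)
    (i : Fin d) (l : S)
    (A B : Set (Fin d)) (hABdisj : A ∩ B = ∅) (hABuniv : A ∪ B = {i}ᶜ)
    (p q : Fin d → S)
    (hiA : ∀ w ∈ PWords c V W i l, ∀ j ∈ A, w j = p j)
    (hiiB : ∀ v ∈ USet c V W i l l ∪ USet c V W i l (c l), ∀ j ∈ B, v j = q j)
    (r : Fin d → S) (hrA : ∀ j ∈ A, r j = p j) (hrB : ∀ j ∈ B, r j = q j)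
    (s : S) (hs1 : s ≠ l) (hs2 : s ≠ c l) :
    BoxOn c ({i}ᶜ) r ∩
        (⋃ w ∈ {w : Fin d → S | w ∈ PWords c V W i l ∧ w i = s},
          BoxOn c ({i}ᶜ) w) ⊆
      BoxOn c ({i}ᶜ) r ∩
        (⋃ w ∈ {w : Fin d → S | w ∈ PWords c V W i l ∧ w i = c s},
          BoxOn c ({i}ᶜ) w) := by
  classical
  -- coordinate classification
  have hcases : ∀ j : Fin d, j = i ∨ j ∈ A ∨ j ∈ B := by
    intro j
    by_cases hj : j = i
    · exact Or.inl hj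
    · right
      have : j ∈ A ∪ B := by rw [hABuniv]; simpa using hj
      exact this
  have hAi : ∀ j ∈ A, j ≠ i := by
    intro j hj
    have : j ∈ A ∪ B := Or.inl hj
    rw [hABuniv] at this; simpa using this
  have hBi : ∀ j ∈ B, j ≠ i := by
    intro j hj
    have : j ∈ A ∪ B := Or.inr hj
    rw [hABuniv] at this; simpa using this
  have hAB : ∀ j ∈ A, j ∉ B := by
    intro j hjA hjB
    have : j ∈ A ∩ B := ⟨hjA, hjB⟩
    rw [hABdisj] at this; exact this
  rintro z ⟨hzr, hzP⟩
  simp only [Set.mem_iUnion, Set.mem_setOf_eq] at hzP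
  obtain ⟨w, ⟨hwP, hws⟩, hzw⟩ := hzP
  obtain ⟨hwR, x₀, hx₀w, hx₀U⟩ := hwP
  have hwP : w ∈ PWords c V W i l := ⟨hwR, x₀, hx₀w, hx₀U⟩
  obtain ⟨hwW, hwl, hwl'⟩ := hwR
  simp only [Set.mem_iUnion] at hx₀U
  obtain ⟨v, hvU, hx₀v⟩ := hx₀U
  have hvB : ∀ j ∈ B, v j = q j := hiiB v hvU
  have hvi : v i = l ∨ v i = c l := by
    rcases hvU with h | h
    · exact Or.inl h.2.1
    · exact Or.inr h.2.1
  have hvV : v ∈ V := by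
    rcases hvU with h | h
    · exact h.1
    · exact h.1
  have hsvi : s ≠ v i := by rcases hvi with h | h <;> rw [h] <;> assumption
  -- the i-th coordinate set t*
  obtain ⟨t, htE, htsub⟩ := exists_eset_superset c hinv hnfix {c s, v i} (by
    rintro x (rfl | rfl)
    · rw [hinv]
      rintro (h | h)
      · exact hnfix s h.symm
      · exact hsvi h
    · rintro (h | h)
      · have h2 := congrArg c h
        rw [hinv, hinv] at h2
        exact hsvi h2.symm
      · exact hnfix (v i) h)
  have htcs : c s ∈ t := htsub (by simp)
  have htvi : v i ∈ t := htsub (by simp)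
  -- A-coordinate sets
  have hEA : ∀ j, j ∈ A → ∃ E, E ∈ ESet c ∧ p j ∈ E ∧ v j ∈ E := by
    intro j hj
    have hwj : w j = p j := hiA w hwP j hj
    have hxE : x₀ j ∈ ESet c := (hx₀w j).1
    have hxw : w j ∈ x₀ j := (hx₀w j).2
    have hxv : v j ∈ x₀ j := (hx₀v j).2
    obtain ⟨E, hE, hsub⟩ := exists_eset_superset c hinv hnfix {p j, v j} (by
      rintro x (rfl | rfl)
      · rintro (h | h)
        · exact hnfix (p j) h
        · rw [← hwj] at h
          exact eset_not_both hxE hxw (h ▸ hxv)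
      · rintro (h | h)
        · rw [← hwj] at h
          exact eset_not_both hxE hxv (h ▸ hxw)
        · exact hnfix (v j) h)
    exact ⟨E, hE, hsub (by simp), hsub (by simp)⟩
  choose EA hEAmem hEAp hEAv using hEA
  -- the point Y
  set Y : Fin d → Set S := fun j =>
    if hj : j = i then t else if hjA : j ∈ A then EA j hjA else z j with hY
  have hYi : Y i = t := by
    show (if hj : i = i then t else if hjA : i ∈ A then EA i hjA else z i) = t
    rw [dif_pos rfl]
  have hYA : ∀ j (hj : j ∈ A), Y j = EA j hj := by
    intro j hj
    show (if hj' : j = i then t else if hjA : j ∈ A then EA j hjA else z j) = EA j hj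
    rw [dif_neg (hAi j hj), dif_pos hj]
  have hYB : ∀ j ∈ B, Y j = z j := by
    intro j hj
    show (if hj' : j = i then t else if hjA : j ∈ A then EA j hjA else z j) = z j
    rw [dif_neg (hBi j hj), dif_neg (fun h => hAB j h hj)]
  have hzrE : ∀ j, j ≠ i → z j ∈ ESet c ∧ r j ∈ z j := by
    intro j hj
    exact hzr j (by simpa using hj)
  have hYv : Y ∈ WordBox c v := by
    intro j
    rcases hcases j with rfl | hj | hj
    · rw [hYi]; exact ⟨htE, htvi⟩
    · rw [hYA j hj]; exact ⟨hEAmem j hj, hEAv j hj⟩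
    · rw [hYB j hj]
      have hz := hzrE j (hBi j hj)
      refine ⟨hz.1, ?_⟩
      rw [hvB j hj, ← hrB j hj]
      exact hz.2
  have hYW : Y ∈ CodeReal c W := by
    rw [← hequiv]
    simp only [CodeReal, Set.mem_iUnion]
    exact ⟨v, hvV, hYv⟩
  simp only [CodeReal, Set.mem_iUnion] at hYW
  obtain ⟨w', hw'W, hYw'⟩ := hYW
  have hw'it : w' i ∈ t := by
    have := hYw' i
    rw [hYi] at this
    exact this.2
  have hsnt : s ∉ t := by
    have := eset_not_both htE htcs
    rwa [hinv] at this
  have hwne : w ≠ w' := by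
    intro h
    rw [h] at hws
    rw [hws] at hw'it
    exact hsnt hw'it
  obtain ⟨j, hj⟩ := hWcode w hwW w' hw'W hwne
  have hji : j = i := by
    rcases hcases j with h | h | h
    · exact h
    · exfalso
      have hwj : w j = p j := hiA w hwP j h
      have hYmem : Y j ∈ ESet c := by rw [hYA j h]; exact hEAmem j h
      have hwY : w j ∈ Y j := by rw [hYA j h, hwj]; exact hEAp j h
      have hw'Y : w' j ∈ Y j := (hYw' j).2
      exact eset_not_both hYmem hwY (hj ▸ hw'Y)
    · exfalso
      have hz := hzrE j (hBi j h)
      have hwY : w j ∈ z j := (hzw j (by simpa using hBi j h)).2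
      have hw'Y : w' j ∈ z j := by
        have := (hYw' j).2
        rwa [hYB j h] at this
      exact eset_not_both hz.1 hwY (hj ▸ hw'Y)
  rw [hji] at hj
  rw [hws] at hj
  -- w' ∈ PWords
  have hw'P : w' ∈ PWords c V W i l := by
    refine ⟨⟨hw'W, ?_, ?_⟩, Y, hYw', ?_⟩
    · rw [hj]
      intro h
      exact hs2 (by rw [← hinv s, h])
    · rw [hj]
      intro h
      exact hs1 (by rw [← hinv s, h, hinv])
    · simp only [Set.mem_iUnion]
      exact ⟨v, hvU, hYv⟩
  refine ⟨hzr, ?_⟩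
  simp only [Set.mem_iUnion, Set.mem_setOf_eq]
  refine ⟨w', ⟨hw'P, hj⟩, ?_⟩
  intro m hm
  have hmi : m ≠ i := by simpa using hm
  refine ⟨(hzrE m hmi).1, ?_⟩
  rcases hcases m with h | h | h
  · exact absurd h hmi
  · rw [hiA w' hw'P m h, ← hrA m h]
    exact (hzrE m hmi).2
  · have := (hYw' m).2
    rwa [hYB m h] at this

/-- Let `V, W ⊆ S^d` be disjoint equivalent polybox codes with
`U^{i,l} ≠ ∅`, and suppose `[d] \ {i} = A ∪ B` (disjointly) with words `p, q` such
that (i) every `w ∈ P` satisfies `w_A = p`, and (ii) every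
`v ∈ U^{i,l} ∪ U^{i,l'}` satisfies `v_B = q`. Then for every `s ∈ S \ {l, l'}` the
codes `P^{i,s}_{i^c}` and `P^{i,s'}_{i^c}` are `r`-equivalent, where `r_A = p` and
`r_B = q` (stated via cylinder realizations over the coordinates `≠ i`).
In particular, if `|B| ≤ 1`, then there is a twin pair in `V` or in `W`. -/
theorem p_codes_r_equivalent {S : Type*} [Fintype S] [DecidableEq S]
    (c : S → S) (hinv : ∀ s, c (c s) = s) (hnfix : ∀ s, c s ≠ s)
    (d : ℕ) (V W : Finset (Fin d → S))
    (hVcode : PolyboxCode c V) (hWcode : PolyboxCode c W)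
    (hdisj : Disjoint V W) (hequiv : EquivalentCodes c V W)
    (i : Fin d) (l : S)
    (hUl : (USet c V W i l l).Nonempty)
    (A B : Set (Fin d)) (hABdisj : A ∩ B = ∅) (hABuniv : A ∪ B = {i}ᶜ)
    (p q : Fin d → S)
    (hiA : ∀ w ∈ PWords c V W i l, ∀ j ∈ A, w j = p j)
    (hiiB : ∀ v ∈ USet c V W i l l ∪ USet c V W i l (c l), ∀ j ∈ B, v j = q j)
    (r : Fin d → S) (hrA : ∀ j ∈ A, r j = p j) (hrB : ∀ j ∈ B, r j = q j) :
    (∀ s : S, s ≠ l → s ≠ c l →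
      BoxOn c ({i}ᶜ) r ∩
          (⋃ w ∈ {w : Fin d → S | w ∈ PWords c V W i l ∧ w i = s},
            BoxOn c ({i}ᶜ) w) =
        BoxOn c ({i}ᶜ) r ∩
          (⋃ w ∈ {w : Fin d → S | w ∈ PWords c V W i l ∧ w i = c s},
            BoxOn c ({i}ᶜ) w)) ∧
    (B.ncard ≤ 1 →
      (∃ u ∈ V, ∃ v ∈ V, TwinPair c u v) ∨ (∃ u ∈ W, ∃ v ∈ W, TwinPair c u v)) := by
  classical
  have hpart1 : ∀ s : S, s ≠ l → s ≠ c l →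
      BoxOn c ({i}ᶜ) r ∩
          (⋃ w ∈ {w : Fin d → S | w ∈ PWords c V W i l ∧ w i = s},
            BoxOn c ({i}ᶜ) w) =
        BoxOn c ({i}ᶜ) r ∩
          (⋃ w ∈ {w : Fin d → S | w ∈ PWords c V W i l ∧ w i = c s},
            BoxOn c ({i}ᶜ) w) := by
    intro s hs1 hs2
    have hcs1 : c s ≠ l := fun h => hs2 (by rw [← hinv s, h])
    have hcs2 : c s ≠ c l := fun h => hs1 (by
      have := congrArg c h; rwa [hinv, hinv] at this)
    apply Set.Subset.antisymm
    · exact key_incl c hinv hnfix V W hWcode hequiv i l A B hABdisj hABuniv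
        p q hiA hiiB r hrA hrB s hs1 hs2
    · have h2 := key_incl c hinv hnfix V W hWcode hequiv i l A B hABdisj hABuniv
        p q hiA hiiB r hrA hrB (c s) hcs1 hcs2
      simpa only [hinv] using h2
  refine ⟨hpart1, ?_⟩
  intro hB
  right
  by_contra hntw
  push_neg at hntw
  -- coordinate classification helpers
  have hcases : ∀ j : Fin d, j = i ∨ j ∈ A ∨ j ∈ B := by
    intro j
    by_cases hj : j = i
    · exact Or.inl hj
    · right
      have : j ∈ A ∪ B := by rw [hABuniv]; simpa using hj
      exact this
  have hBi : ∀ j ∈ B, j ≠ i := by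
    intro j hj
    have : j ∈ A ∪ B := Or.inr hj
    rw [hABuniv] at this; simpa using this
  -- extract v₀, w₀
  obtain ⟨v₀, hv₀U'⟩ := hUl
  have hv₀U : v₀ ∈ USet c V W i l l ∪ USet c V W i l (c l) := Or.inl hv₀U'
  obtain ⟨hv₀V, hv₀i, x, hxv₀, hxW⟩ := hv₀U'
  simp only [Set.mem_iUnion] at hxW
  obtain ⟨w₀, hw₀R, hxw₀⟩ := hxW
  have hw₀P : w₀ ∈ PWords c V W i l :=
    ⟨hw₀R, x, hxw₀, by simp only [Set.mem_iUnion]; exact ⟨v₀, hv₀U, hxv₀⟩⟩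
  obtain ⟨hw₀W, hs₀l, hs₀l'⟩ := hw₀R
  have hPA : ∀ w ∈ PWords c V W i l, ∀ j ∈ A, w j = r j :=
    fun w hw j hj => (hiA w hw j hj).trans (hrA j hj).symm
  have hPW : ∀ w ∈ PWords c V W i l, w ∈ W := fun w hw => hw.1.1
  have hPB : ∀ w ∈ PWords c V W i l, ∀ j ∈ B, w j ≠ c (q j) := by
    intro w hw j hj hcon
    obtain ⟨-, y, hyw, hyU⟩ := hw
    simp only [Set.mem_iUnion] at hyU
    obtain ⟨v, hvU, hyv⟩ := hyU
    have hvq : v j = q j := hiiB v hvU j hj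
    have hq : q j ∈ y j := by rw [← hvq]; exact (hyv j).2
    exact eset_not_both (hyw j).1 hq (hcon ▸ (hyw j).2)
  -- first test point z₁
  have hzc : ∀ j : Fin d, j ≠ i → ∃ E, E ∈ ESet c ∧ w₀ j ∈ E ∧ r j ∈ E := by
    intro j hj
    rcases hcases j with h | h | h
    · exact absurd h hj
    · have heq : w₀ j = r j := hPA w₀ hw₀P j h
      obtain ⟨E, hE, hsub⟩ := exists_eset_superset c hinv hnfix {w₀ j} (by
        rintro x rfl
        exact fun h2 => hnfix (w₀ j) h2)
      exact ⟨E, hE, hsub rfl, by rw [← heq]; exact hsub rfl⟩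
    · have hrq : r j = q j := hrB j h
      have hw₀q : w₀ j ≠ c (q j) := hPB w₀ hw₀P j h
      obtain ⟨E, hE, hsub⟩ := exists_eset_superset c hinv hnfix {w₀ j, r j} (by
        rintro x (rfl | rfl)
        · rintro (h2 | h2)
          · exact hnfix (w₀ j) h2
          · rw [hrq] at h2
            have := congrArg c h2; rw [hinv] at this
            exact hw₀q this
        · rintro (h2 | h2)
          · rw [hrq] at h2
            exact hw₀q h2.symm
          · exact hnfix (r j) h2)
      exact ⟨E, hE, hsub (by simp), hsub (by simp)⟩
  choose E₁ hE₁ using hzc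
  set z₁ : Fin d → Set S := fun j => if hj : j = i then (∅ : Set S) else E₁ j hj
    with hz₁def
  have hz₁ : ∀ j (hj : j ≠ i), z₁ j = E₁ j hj := by
    intro j hj
    show (if hj' : j = i then (∅ : Set S) else E₁ j hj') = E₁ j hj
    rw [dif_neg hj]
  have hz₁r : z₁ ∈ BoxOn c ({i}ᶜ) r := by
    intro j hjmem
    have hj : j ≠ i := by simpa using hjmem
    rw [hz₁ j hj]
    exact ⟨(hE₁ j hj).1, (hE₁ j hj).2.2⟩
  have hz₁w₀ : z₁ ∈ BoxOn c ({i}ᶜ) w₀ := by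
    intro j hjmem
    have hj : j ≠ i := by simpa using hjmem
    rw [hz₁ j hj]
    exact ⟨(hE₁ j hj).1, (hE₁ j hj).2.1⟩
  have hz₁L : z₁ ∈ BoxOn c ({i}ᶜ) r ∩
      (⋃ w ∈ {w : Fin d → S | w ∈ PWords c V W i l ∧ w i = w₀ i},
        BoxOn c ({i}ᶜ) w) := by
    refine ⟨hz₁r, ?_⟩
    simp only [Set.mem_iUnion, Set.mem_setOf_eq]
    exact ⟨w₀, ⟨hw₀P, rfl⟩, hz₁w₀⟩
  rw [hpart1 (w₀ i) hs₀l hs₀l'] at hz₁L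
  obtain ⟨-, hz₁P⟩ := hz₁L
  simp only [Set.mem_iUnion, Set.mem_setOf_eq] at hz₁P
  obtain ⟨w₁, ⟨hw₁P, hw₁i⟩, hz₁w₁⟩ := hz₁P
  have hw₁W : w₁ ∈ W := hPW w₁ hw₁P
  rcases (Set.ncard_le_one_iff_eq (Set.toFinite B)).mp hB with hB0 | ⟨k, hBk⟩
  · -- B = ∅
    refine hntw w₀ hw₀W w₁ hw₁W ⟨i, hw₁i, ?_⟩
    intro m hm
    rcases hcases m with h | h | h
    · exact absurd h hm
    · exact (hPA w₀ hw₀P m h).trans (hPA w₁ hw₁P m h).symm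
    · rw [hB0] at h; exact absurd h (Set.notMem_empty m)
  · -- B = {k}
    have hk : k ∈ B := by rw [hBk]; rfl
    have hki : k ≠ i := hBi k hk
    have hPuniq : ∀ w ∈ PWords c V W i l, ∀ w' ∈ PWords c V W i l,
        w i = w' i → w = w' := by
      intro w hw w' hw' hsame
      by_contra hne
      obtain ⟨j, hj⟩ := hWcode w (hPW w hw) w' (hPW w' hw') hne
      rcases hcases j with h | h | h
      · rw [h, hsame] at hj
        exact hnfix (w' i) hj.symm
      · rw [hPA w hw j h] at hj
        have : r j = c (r j) := (hPA w' hw' j h).symm.trans hj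
        exact hnfix (r j) this.symm
      · rw [hBk] at h
        have hjk : j = k := h
        refine hntw w (hPW w hw) w' (hPW w' hw') ⟨j, hj, ?_⟩
        intro m hm
        rcases hcases m with h2 | h2 | h2
        · rw [h2]; exact hsame
        · exact (hPA w hw m h2).trans (hPA w' hw' m h2).symm
        · rw [hBk] at h2
          exact absurd (h2.trans hjk.symm) hm
    have hw₁k : w₁ k ≠ w₀ k := by
      intro h
      refine hntw w₀ hw₀W w₁ hw₁W ⟨i, hw₁i, ?_⟩
      intro m hm
      rcases hcases m with h2 | h2 | h2
      · exact absurd h2 hm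
      · exact (hPA w₀ hw₀P m h2).trans (hPA w₁ hw₁P m h2).symm
      · rw [hBk] at h2
        rw [h2]
        exact h.symm
    have hrk : r k = q k := hrB k hk
    by_cases hq1 : w₁ k = q k
    · -- second test point with F ∋ {q k, c (w₀ k)}
      have hw₀kq : w₀ k ≠ q k := fun h => hw₁k (hq1.trans h.symm)
      obtain ⟨F, hF, hFsub⟩ := exists_eset_superset c hinv hnfix
        {q k, c (w₀ k)} (by
          rintro x (rfl | rfl)
          · rintro (h2 | h2)
            · exact hnfix (q k) h2
            · have := congrArg c h2; rw [hinv, hinv] at this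
              exact hw₀kq this.symm
          · rintro (h2 | h2)
            · rw [hinv] at h2
              exact hw₀kq h2
            · rw [hinv] at h2
              exact hnfix (w₀ k) h2.symm)
      have hFq : q k ∈ F := hFsub (by simp)
      have hFw₀ : c (w₀ k) ∈ F := hFsub (by simp)
      set z₂ : Fin d → Set S := fun j => if j = k then F else z₁ j with hz₂def
      have hz₂k : z₂ k = F := by simp [hz₂def]
      have hz₂ne : ∀ j, j ≠ k → z₂ j = z₁ j := by
        intro j hj; simp [hz₂def, hj]
      have hz₂r : z₂ ∈ BoxOn c ({i}ᶜ) r := by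
        intro j hjmem
        by_cases hjk : j = k
        · subst hjk; rw [hz₂k]
          exact ⟨hF, by rw [hrk]; exact hFq⟩
        · rw [hz₂ne j hjk]; exact hz₁r j hjmem
      have hz₂w₁ : z₂ ∈ BoxOn c ({i}ᶜ) w₁ := by
        intro j hjmem
        by_cases hjk : j = k
        · subst hjk; rw [hz₂k]
          exact ⟨hF, by rw [hq1]; exact hFq⟩
        · rw [hz₂ne j hjk]; exact hz₁w₁ j hjmem
      have hz₂R : z₂ ∈ BoxOn c ({i}ᶜ) r ∩
          (⋃ w ∈ {w : Fin d → S | w ∈ PWords c V W i l ∧ w i = c (w₀ i)},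
            BoxOn c ({i}ᶜ) w) := by
        refine ⟨hz₂r, ?_⟩
        simp only [Set.mem_iUnion, Set.mem_setOf_eq]
        exact ⟨w₁, ⟨hw₁P, hw₁i⟩, hz₂w₁⟩
      rw [← hpart1 (w₀ i) hs₀l hs₀l'] at hz₂R
      obtain ⟨-, h⟩ := hz₂R
      simp only [Set.mem_iUnion, Set.mem_setOf_eq] at h
      obtain ⟨w₂, ⟨hw₂P, hw₂i⟩, hz₂w₂⟩ := h
      have hw₂0 : w₂ = w₀ := hPuniq w₂ hw₂P w₀ hw₀P hw₂i
      rw [hw₂0] at hz₂w₂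
      have hw₀F : w₀ k ∈ F := by
        have := (hz₂w₂ k (by simpa using hki)).2
        rwa [hz₂k] at this
      exact eset_not_both hF hw₀F hFw₀
    · -- second test point with F ∋ {q k, w₀ k, c (w₁ k)}
      have hw₁kq : w₁ k ≠ c (q k) := hPB w₁ hw₁P k hk
      have hw₀kq : w₀ k ≠ c (q k) := hPB w₀ hw₀P k hk
      obtain ⟨F, hF, hFsub⟩ := exists_eset_superset c hinv hnfix
        {q k, w₀ k, c (w₁ k)} (by
          rintro x (rfl | rfl | rfl)
          · rintro (h2 | h2 | h2)
            · exact hnfix (q k) h2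
            · exact hw₀kq h2.symm
            · have := congrArg c h2; rw [hinv, hinv] at this
              exact hq1 this.symm
          · rintro (h2 | h2 | h2)
            · have := congrArg c h2; rw [hinv] at this
              exact hw₀kq this
            · exact hnfix (w₀ k) h2
            · have := congrArg c h2; rw [hinv, hinv] at this
              exact hw₁k this.symm
          · rintro (h2 | h2 | h2)
            · rw [hinv] at h2
              exact hq1 h2
            · rw [hinv] at h2
              exact hw₁k h2
            · rw [hinv] at h2
              exact hnfix (w₁ k) h2.symm)
      have hFq : q k ∈ F := hFsub (by simp)
      have hFw₀ : w₀ k ∈ F := hFsub (by simp)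
      have hFw₁ : c (w₁ k) ∈ F := hFsub (by simp)
      set z₂ : Fin d → Set S := fun j => if j = k then F else z₁ j with hz₂def
      have hz₂k : z₂ k = F := by simp [hz₂def]
      have hz₂ne : ∀ j, j ≠ k → z₂ j = z₁ j := by
        intro j hj; simp [hz₂def, hj]
      have hz₂r : z₂ ∈ BoxOn c ({i}ᶜ) r := by
        intro j hjmem
        by_cases hjk : j = k
        · subst hjk; rw [hz₂k]
          exact ⟨hF, by rw [hrk]; exact hFq⟩
        · rw [hz₂ne j hjk]; exact hz₁r j hjmem
      have hz₂w₀ : z₂ ∈ BoxOn c ({i}ᶜ) w₀ := by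
        intro j hjmem
        by_cases hjk : j = k
        · subst hjk; rw [hz₂k]
          exact ⟨hF, hFw₀⟩
        · rw [hz₂ne j hjk]; exact hz₁w₀ j hjmem
      have hz₂L : z₂ ∈ BoxOn c ({i}ᶜ) r ∩
          (⋃ w ∈ {w : Fin d → S | w ∈ PWords c V W i l ∧ w i = w₀ i},
            BoxOn c ({i}ᶜ) w) := by
        refine ⟨hz₂r, ?_⟩
        simp only [Set.mem_iUnion, Set.mem_setOf_eq]
        exact ⟨w₀, ⟨hw₀P, rfl⟩, hz₂w₀⟩
      rw [hpart1 (w₀ i) hs₀l hs₀l'] at hz₂L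
      obtain ⟨-, h⟩ := hz₂L
      simp only [Set.mem_iUnion, Set.mem_setOf_eq] at h
      obtain ⟨w₂, ⟨hw₂P, hw₂i⟩, hz₂w₂⟩ := h
      have hw₂1 : w₂ = w₁ := hPuniq w₂ hw₂P w₁ hw₁P (hw₂i.trans hw₁i.symm)
      rw [hw₂1] at hz₂w₂
      have hw₁F : w₁ k ∈ F := by
        have := (hz₂w₂ k (by simpa using hki)).2
        rwa [hz₂k] at this
      exact eset_not_both hF hw₁F hFw₁
end
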